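/- Let S be an α-stable subordinator with index α ∈ (0,1). If θ ∈ (0, 1/α), then almost surely, for every T > 0, the Lebesgue–Stieltjes integral ∫_0^T t^{-θ} dS_t is finite. -/

import Mathlib

open MeasureTheory ProbabilityTheory Filter Set
open scoped ENNReal NNReal Topology

/-- An `α`-stable subordinator on a probability space `Ω`: a real-valued process with
`S 0 = 0`, stationary independent increments, almost surely nondecreasing right-continuous
sample paths, and Laplace transform `E[exp (-λ S t)] = exp (-t λ^α)`.
The process is extended by `0` to nonpositive times, so that the a.s. path regularity on
`[0, ∞)` can be expressed as regularity of the extended path on all of `ℝ`. -/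
structure StableSubordinator (Ω : Type*) [MeasureSpace Ω] [IsProbabilityMeasure (ℙ : Measure Ω)]
    (α : ℝ) where
  S : ℝ → Ω → ℝ
  measurable : ∀ t : ℝ, Measurable (S t)
  zero_of_nonpos : ∀ t : ℝ, t ≤ 0 → ∀ ω, S t ω = 0
  path : ∀ᵐ ω : Ω, Monotone (fun t => S t ω) ∧
    ∀ x : ℝ, ContinuousWithinAt (fun t => S t ω) (Set.Ici x) x
  indep_increments : ∀ (n : ℕ) (t : Fin (n + 1) → ℝ), Monotone t → (∀ i, 0 ≤ t i) →
    iIndepFun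
      (fun (i : Fin n) ω => S (t i.succ) ω - S (t i.castSucc) ω) ℙ
  stationary_increments : ∀ s t : ℝ, 0 ≤ s → s ≤ t →
    Measure.map (fun ω => S t ω - S s ω) ℙ = Measure.map (S (t - s)) ℙ
  laplace : ∀ lam : ℝ, 0 < lam → ∀ t : ℝ, 0 ≤ t →
    ∫ ω, Real.exp (-lam * S t ω) ∂ℙ = Real.exp (-t * lam ^ α)

open Classical in
/-- The Lebesgue–Stieltjes measure induced by a nondecreasing right-continuous path
(junk value `0` if the path is not such). -/
noncomputable def pathMeasure (f : ℝ → ℝ) : Measure ℝ :=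
  if h : Monotone f ∧ ∀ x : ℝ, ContinuousWithinAt f (Set.Ici x) x then
    StieltjesFunction.measure ⟨f, h.1, h.2⟩ else 0

section aux
variable {Ω : Type*} [MeasureSpace Ω] [IsProbabilityMeasure (ℙ : Measure Ω)] {α : ℝ}

lemma StableSub.nonneg (X : StableSubordinator Ω α) :
    ∀ᵐ ω : Ω, ∀ t : ℝ, 0 ≤ X.S t ω := by
  filter_upwards [X.path] with ω h t
  rcases le_or_gt t 0 with ht | ht
  · rw [X.zero_of_nonpos t ht]
  · have h0 : X.S 0 ω = 0 := X.zero_of_nonpos 0 le_rfl ω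
    have := h.1 ht.le
    simpa [h0] using this

lemma StableSub.tail (hα : α ∈ Set.Ioo (0 : ℝ) 1) (X : StableSubordinator Ω α)
    {t lam : ℝ} (ht : 0 ≤ t) (hlam : 0 < lam) :
    ℙ {ω | lam⁻¹ ≤ X.S t ω} ≤ ENNReal.ofReal (t * lam ^ α / (1 - Real.exp (-1))) := by
  set c : ℝ := 1 - Real.exp (-1) with hc_def
  have hc : 0 < c := by
    have : Real.exp (-1) < 1 := Real.exp_lt_one_iff.2 (by norm_num)
    linarith
  set A : Set Ω := {ω | lam⁻¹ ≤ X.S t ω} with hA_def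
  have hA : MeasurableSet A := measurableSet_le measurable_const (X.measurable t)
  have hint : Integrable (fun ω => Real.exp (-lam * X.S t ω)) ℙ := by
    refine (integrable_const (1 : ℝ)).mono' ?_ ?_
    · exact (((X.measurable t).const_mul (-lam)).exp).aestronglyMeasurable
    · filter_upwards [StableSub.nonneg X] with ω h
      rw [Real.norm_eq_abs, abs_of_pos (Real.exp_pos _)]
      exact Real.exp_le_one_iff.2 (mul_nonpos_of_nonpos_of_nonneg (by linarith) (h t))
  have hkey : ∀ᵐ ω : Ω, A.indicator (fun _ => c) ω ≤ 1 - Real.exp (-lam * X.S t ω) := by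
    filter_upwards [StableSub.nonneg X] with ω h
    by_cases hω : ω ∈ A
    · rw [Set.indicator_of_mem hω]
      have h1 : (1:ℝ) ≤ lam * X.S t ω := by
        have := hω
        rw [hA_def, Set.mem_setOf_eq] at this
        calc (1:ℝ) = lam * lam⁻¹ := by field_simp
        _ ≤ lam * X.S t ω := by gcongr
      have : Real.exp (-lam * X.S t ω) ≤ Real.exp (-1) := by
        apply Real.exp_le_exp.2; nlinarith
      linarith
    · rw [Set.indicator_of_notMem hω]
      have : Real.exp (-lam * X.S t ω) ≤ 1 :=
        Real.exp_le_one_iff.2 (by nlinarith [h t])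
      linarith
  have hind : Integrable (A.indicator fun _ => c) ℙ := (integrable_const c).indicator hA
  have hmono := integral_mono_ae hind ((integrable_const (1:ℝ)).sub hint) hkey
  simp only [Pi.sub_apply] at hmono
  rw [integral_indicator_const c hA, integral_sub (integrable_const 1) hint,
    integral_const, X.laplace lam hlam t ht] at hmono
  simp only [Measure.real, measure_univ, ENNReal.toReal_one, smul_eq_mul, one_smul] at hmono
  have hx : 0 ≤ t * lam ^ α := mul_nonneg ht (Real.rpow_nonneg hlam.le _)
  have h1e : 1 - Real.exp (-(t * lam ^ α)) ≤ t * lam ^ α := by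
    nlinarith [Real.add_one_le_exp (-(t * lam ^ α))]
  have hPA : (ℙ A).toReal ≤ t * lam ^ α / c := by
    rw [le_div_iff₀ hc]
    calc (ℙ A).toReal * c ≤ 1 - Real.exp (-t * lam ^ α) := by linarith
    _ ≤ t * lam ^ α := by rw [neg_mul]; exact h1e
  calc ℙ A = ENNReal.ofReal (ℙ A).toReal := (ENNReal.ofReal_toReal (measure_ne_top _ _)).symm
  _ ≤ _ := ENNReal.ofReal_le_ofReal hPA

end aux

lemma pow_rpow_comm (x : ℝ) (hx : 0 ≤ x) (k : ℕ) (y : ℝ) : (x ^ k) ^ y = (x ^ y) ^ k := by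
  rw [← Real.rpow_natCast x k, ← Real.rpow_mul hx, mul_comm, Real.rpow_mul hx, Real.rpow_natCast]

lemma StableSub.eventual {Ω : Type*} [MeasureSpace Ω] [IsProbabilityMeasure (ℙ : Measure Ω)]
    {α : ℝ} (hα : α ∈ Set.Ioo (0 : ℝ) 1) (X : StableSubordinator Ω α)
    {γ : ℝ} (hγ0 : 0 < γ) (hγ : γ * α < 1) :
    ∀ᵐ ω : Ω, ∀ᶠ n : ℕ in atTop,
      X.S ((2:ℝ)⁻¹ ^ n) ω < ((2:ℝ)⁻¹ ^ n) ^ γ := by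
  set q : ℕ → ℝ := fun n => (2:ℝ)⁻¹ ^ n with hq_def
  have hq : ∀ n, 0 < q n := fun n => pow_pos (by norm_num) n
  set c : ℝ := 1 - Real.exp (-1) with hc_def
  have hc : 0 < c := by
    have : Real.exp (-1) < 1 := Real.exp_lt_one_iff.2 (by norm_num)
    linarith
  set s : ℕ → Set Ω := fun n => {ω | (q n) ^ γ ≤ X.S (q n) ω} with hs_def
  set r : ℝ := (2:ℝ)⁻¹ ^ (1 - γ * α) with hr_def
  have hr0 : 0 ≤ r := Real.rpow_nonneg (by norm_num) _
  have hr1 : r < 1 := Real.rpow_lt_one (by norm_num) (by norm_num) (by linarith)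
  have hbound : ∀ n, ℙ (s n) ≤ ENNReal.ofReal (r ^ n / c) := by
    intro n
    have hlam : 0 < (q n) ^ (-γ) := Real.rpow_pos_of_pos (hq n) _
    have hinv : ((q n) ^ (-γ))⁻¹ = (q n) ^ γ := by
      rw [Real.rpow_neg (hq n).le, inv_inv]
    have := StableSub.tail hα X (t := q n) (lam := (q n) ^ (-γ)) (hq n).le hlam
    rw [hinv] at this
    refine this.trans (le_of_eq ?_)
    congr 1
    have h1 : ((q n) ^ (-γ)) ^ α = (q n) ^ (-(γ * α)) := by
      rw [← Real.rpow_mul (hq n).le, neg_mul]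
    have h2 : q n * (q n) ^ (-(γ * α)) = (q n) ^ (1 - γ * α) := by
      nth_rewrite 1 [← Real.rpow_one (q n)]
      rw [← Real.rpow_add (hq n), sub_eq_add_neg]
    have h3 : (q n) ^ (1 - γ * α) = r ^ n := by
      rw [hq_def, hr_def]
      exact pow_rpow_comm _ (by norm_num) n _
    rw [h1, h2, h3]
  have hsum : (∑' n, ℙ (s n)) ≠ ∞ := by
    have hS : Summable (fun n : ℕ => r ^ n / c) :=
      (summable_geometric_of_lt_one hr0 hr1).div_const c
    have hle : (∑' n, ℙ (s n)) ≤ ∑' n, ENNReal.ofReal (r ^ n / c) :=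
      ENNReal.tsum_le_tsum hbound
    rw [← ENNReal.ofReal_tsum_of_nonneg (fun n => by positivity) hS] at hle
    exact (hle.trans_lt ENNReal.ofReal_lt_top).ne
  filter_upwards [ae_eventually_notMem hsum] with ω h
  filter_upwards [h] with n hn
  exact lt_of_not_ge hn

/-- If `θ ∈ (0, 1/α)`, then almost surely, for every `T > 0`, the Lebesgue–Stieltjes
integral `∫_0^T t^(-θ) dS_t` is finite. -/
theorem singular_integral_finite {Ω : Type*} [MeasureSpace Ω]
    [IsProbabilityMeasure (ℙ : Measure Ω)] {α : ℝ} (hα : α ∈ Set.Ioo (0 : ℝ) 1)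
    (X : StableSubordinator Ω α) {θ : ℝ} (hθ : θ ∈ Set.Ioo 0 (1 / α)) :
    ∀ᵐ ω : Ω, ∀ T : ℝ, 0 < T →
      ∫⁻ t in Set.Ioc (0 : ℝ) T, ENNReal.ofReal (t ^ (-θ))
        ∂(pathMeasure (fun t => X.S t ω)) < ∞ := by
  obtain ⟨hα0, hα1⟩ := hα
  obtain ⟨hθ0, hθ1⟩ := hθ
  set γ : ℝ := (θ + 1 / α) / 2 with hγ_def
  have hια : 0 < 1 / α := by positivity
  have hθγ : θ < γ := by rw [hγ_def]; linarith
  have hγι : γ < 1 / α := by rw [hγ_def]; linarith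
  have hγ0 : 0 < γ := by linarith
  have hγα : γ * α < 1 := by
    have := mul_lt_mul_of_pos_right hγι hα0
    rwa [one_div, inv_mul_cancel₀ hα0.ne'] at this
  filter_upwards [X.path, StableSub.eventual ⟨hα0, hα1⟩ X hγ0 hγα] with ω hpath hev
  obtain ⟨hmono, hrc⟩ := hpath
  obtain ⟨N, hN⟩ := eventually_atTop.1 hev
  intro T hT
  set f : ℝ → ℝ := fun t => X.S t ω with hf_def
  set F : StieltjesFunction ℝ := ⟨f, hmono, hrc⟩ with hF_def
  have hpm : pathMeasure f = F.measure := by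
    rw [pathMeasure, dif_pos ⟨hmono, hrc⟩]
  rw [hpm]
  have hf0 : ∀ u : ℝ, 0 ≤ f u := by
    intro u
    rcases le_or_gt u 0 with hu | hu
    · exact (X.zero_of_nonpos u hu ω).ge
    · have h0 : f 0 = 0 := X.zero_of_nonpos 0 le_rfl ω
      have := hmono hu.le
      rw [h0] at this; exact this
  set q : ℕ → ℝ := fun n => (2:ℝ)⁻¹ ^ n with hq_def
  have hq : ∀ n, 0 < q n := fun n => pow_pos (by norm_num) n
  have hNb : ∀ n : ℕ, f (q (N + n)) ≤ (q (N + n)) ^ γ := fun n => (hN (N + n) (by omega)).le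
  set b : ℝ := q N with hb_def
  set M : ℝ := max T b with hM_def
  have hbM : b ≤ M := le_max_right _ _
  have hmeasIoc : ∀ a c : ℝ, F.measure (Ioc a c) = ENNReal.ofReal (f c - f a) := by
    intro a c; exact F.measure_Ioc a c
  have hmain : ∫⁻ t in Set.Ioc (0 : ℝ) T, ENNReal.ofReal (t ^ (-θ)) ∂F.measure ≤
      (∫⁻ t in Set.Ioc (0 : ℝ) b, ENNReal.ofReal (t ^ (-θ)) ∂F.measure) +
      ∫⁻ t in Set.Ioc b M, ENNReal.ofReal (t ^ (-θ)) ∂F.measure := by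
    calc ∫⁻ t in Set.Ioc (0 : ℝ) T, ENNReal.ofReal (t ^ (-θ)) ∂F.measure
        ≤ ∫⁻ t in Set.Ioc (0 : ℝ) M, ENNReal.ofReal (t ^ (-θ)) ∂F.measure :=
          lintegral_mono_set (Set.Ioc_subset_Ioc_right (le_max_left _ _))
      _ = ∫⁻ t in Set.Ioc (0 : ℝ) b ∪ Set.Ioc b M, ENNReal.ofReal (t ^ (-θ)) ∂F.measure := by
          rw [Set.Ioc_union_Ioc_eq_Ioc (hq N).le hbM]
      _ ≤ _ := lintegral_union_le _ _ _
  refine lt_of_le_of_lt hmain (ENNReal.add_lt_top.2 ⟨?_, ?_⟩)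
  · -- singular part near 0
    have hsub : Set.Ioc (0:ℝ) b ⊆ ⋃ n : ℕ, Set.Ioc (q (N + n + 1)) (q (N + n)) := by
      intro t ht
      obtain ⟨ht0, htb⟩ := ht
      have hex : ∃ n, q (N + n) < t := by
        obtain ⟨n, hn⟩ := exists_pow_lt_of_lt_one ht0 (by norm_num : (2:ℝ)⁻¹ < 1)
        refine ⟨n, lt_of_le_of_lt ?_ hn⟩
        exact pow_le_pow_of_le_one (by norm_num) (by norm_num) (by omega)
      classical
      have hm : q (N + Nat.find hex) < t := Nat.find_spec hex
      have hm0 : Nat.find hex ≠ 0 := by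
        intro h; rw [h] at hm; simp only [Nat.add_zero] at hm
        exact absurd htb (not_le.2 hm)
      obtain ⟨k, hk⟩ := Nat.exists_eq_succ_of_ne_zero hm0
      have hkk : ¬ q (N + k) < t := Nat.find_min hex (by omega)
      rw [hk] at hm
      refine Set.mem_iUnion.2 ⟨k, ?_, not_lt.1 hkk⟩
      have : N + (k + 1) = N + k + 1 := by omega
      rwa [this] at hm
    set u : ℝ := (2:ℝ)⁻¹ ^ (-θ) with hu_def
    set v : ℝ := (2:ℝ)⁻¹ ^ γ with hv_def
    set w : ℝ := u * v with hw_def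
    have hu0 : 0 < u := Real.rpow_pos_of_pos (by norm_num) _
    have hv0 : 0 < v := Real.rpow_pos_of_pos (by norm_num) _
    have hw0 : 0 < w := mul_pos hu0 hv0
    have hw1 : w < 1 := by
      have : w = (2:ℝ)⁻¹ ^ (γ - θ) := by
        rw [hw_def, hu_def, hv_def, ← Real.rpow_add (by norm_num)]
        ring_nf
      rw [this]
      exact Real.rpow_lt_one (by norm_num) (by norm_num) (by linarith)
    set K : ℝ := u ^ (N + 1) * v ^ N with hK_def
    have hterm : ∀ n : ℕ,
        ∫⁻ t in Set.Ioc (q (N + n + 1)) (q (N + n)), ENNReal.ofReal (t ^ (-θ)) ∂F.measure ≤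
        ENNReal.ofReal (K * w ^ n) := by
      intro n
      have h1 : ∫⁻ t in Set.Ioc (q (N + n + 1)) (q (N + n)), ENNReal.ofReal (t ^ (-θ)) ∂F.measure
          ≤ ENNReal.ofReal ((q (N + n + 1)) ^ (-θ)) * F.measure (Set.Ioc (q (N+n+1)) (q (N+n))) := by
        rw [← setLIntegral_const]
        refine setLIntegral_mono measurable_const (fun x hx => ?_)
        exact ENNReal.ofReal_le_ofReal
          (Real.rpow_le_rpow_of_nonpos (hq (N+n+1)) hx.1.le (by linarith))
      have h2 : F.measure (Set.Ioc (q (N+n+1)) (q (N+n))) ≤ ENNReal.ofReal ((q (N+n)) ^ γ) := by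
        rw [hmeasIoc]
        exact ENNReal.ofReal_le_ofReal (by linarith [hf0 (q (N+n+1)), hNb n])
      calc _ ≤ ENNReal.ofReal ((q (N + n + 1)) ^ (-θ)) * ENNReal.ofReal ((q (N+n)) ^ γ) := by
            exact h1.trans (mul_le_mul_right h2 _)
        _ = ENNReal.ofReal ((q (N + n + 1)) ^ (-θ) * (q (N+n)) ^ γ) :=
            (ENNReal.ofReal_mul (Real.rpow_nonneg (hq _).le _)).symm
        _ = ENNReal.ofReal (K * w ^ n) := by
            congr 1
            rw [hq_def]
            have e1 : ((2:ℝ)⁻¹ ^ (N+n+1) : ℝ) ^ (-θ) = u ^ (N+n+1) :=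
              pow_rpow_comm _ (by norm_num) _ _
            have e2 : ((2:ℝ)⁻¹ ^ (N+n) : ℝ) ^ γ = v ^ (N+n) :=
              pow_rpow_comm _ (by norm_num) _ _
            rw [e1, e2, hK_def, hw_def]
            rw [show N + n + 1 = (N + 1) + n by omega, pow_add, pow_add, mul_pow]
            ring
    have hsummable : Summable (fun n : ℕ => K * w ^ n) :=
      (summable_geometric_of_lt_one hw0.le hw1).mul_left K
    calc ∫⁻ t in Set.Ioc (0:ℝ) b, ENNReal.ofReal (t ^ (-θ)) ∂F.measure
        ≤ ∫⁻ t in ⋃ n : ℕ, Set.Ioc (q (N + n + 1)) (q (N + n)),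
            ENNReal.ofReal (t ^ (-θ)) ∂F.measure := lintegral_mono_set hsub
      _ ≤ ∑' n : ℕ, ∫⁻ t in Set.Ioc (q (N + n + 1)) (q (N + n)),
            ENNReal.ofReal (t ^ (-θ)) ∂F.measure := lintegral_iUnion_le _ _
      _ ≤ ∑' n : ℕ, ENNReal.ofReal (K * w ^ n) := ENNReal.tsum_le_tsum hterm
      _ = ENNReal.ofReal (∑' n : ℕ, K * w ^ n) :=
          (ENNReal.ofReal_tsum_of_nonneg (fun n => by positivity) hsummable).symm
      _ < ∞ := ENNReal.ofReal_lt_top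
  · -- regular part
    calc ∫⁻ t in Set.Ioc b M, ENNReal.ofReal (t ^ (-θ)) ∂F.measure
        ≤ ∫⁻ _ in Set.Ioc b M, ENNReal.ofReal (b ^ (-θ)) ∂F.measure := by
          refine setLIntegral_mono measurable_const (fun x hx => ?_)
          exact ENNReal.ofReal_le_ofReal
            (Real.rpow_le_rpow_of_nonpos (hq N) hx.1.le (by linarith))
      _ = ENNReal.ofReal (b ^ (-θ)) * F.measure (Set.Ioc b M) := setLIntegral_const _ _
      _ < ∞ := by
          rw [hmeasIoc]
          exact ENNReal.mul_lt_top ENNReal.ofReal_lt_top ENNReal.ofReal_lt_top
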